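/- Let G be a bipartite finite simple graph with at least one vertex and without isolated vertices. Then G is unmixed if and only if G satisfies MSC. -/

import Mathlib

variable {V : Type*} [Fintype V] [DecidableEq V]

/-- For `k ∈ ℕ`, a `k`-cover of `G` is a function from the vertices of `G` to `ℕ` that is
not identically zero and whose values at the two endpoints of any edge sum to at least `k`. -/
def IsCover (G : SimpleGraph V) (k : ℕ) (a : V → ℕ) : Prop :=
  a ≠ 0 ∧ ∀ i j : V, G.Adj i j → k ≤ a i + a j

/-- A `k`-cover is basic if it is not the pointwise sum of a `k`-cover and a `0`-cover. -/
def IsBasicCover (G : SimpleGraph V) (k : ℕ) (a : V → ℕ) : Prop :=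
  IsCover G k a ∧ ¬ ∃ b c : V → ℕ, IsCover G k b ∧ IsCover G 0 c ∧ a = b + c

/-- `G` is a domain if for all `s, t` with `s + t ≥ 1`, the pointwise sum of any `s` basic
`1`-covers and any `t` basic `2`-covers of `G` is a basic `(s + 2t)`-cover. -/
def IsGraphDomain (G : SimpleGraph V) : Prop :=
  ∀ s t : ℕ, 1 ≤ s + t → ∀ f : Fin s → V → ℕ, ∀ g : Fin t → V → ℕ,
    (∀ p, IsBasicCover G 1 (f p)) → (∀ q, IsBasicCover G 2 (g q)) →
    IsBasicCover G (s + 2 * t) ((∑ p, f p) + (∑ q, g q))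

/-- `G` is unmixed if all basic `1`-covers of `G` have the same norm. -/
def IsUnmixed (G : SimpleGraph V) : Prop :=
  ∀ a b : V → ℕ, IsBasicCover G 1 a → IsBasicCover G 1 b → ∑ v, a v = ∑ v, b v

/-- `G` satisfies WSC if it has at least one edge and every non-isolated vertex `i` has a
neighbour `j` such that any neighbour of `i` is adjacent to any neighbour of `j`. -/
def SatisfiesWSC (G : SimpleGraph V) : Prop :=
  (∃ i j : V, G.Adj i j) ∧
    ∀ i : V, (∃ x, G.Adj i x) →
      ∃ j : V, G.Adj i j ∧ ∀ i' j' : V, G.Adj i i' → G.Adj j j' → G.Adj i' j'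

/-- `G` satisfies SC if for every edge `{i, j}`, every neighbour `i'` of `i` and every
neighbour `j'` of `j`, one has `i' ≠ j'` and `{i', j'}` is an edge. -/
def SatisfiesSC (G : SimpleGraph V) : Prop :=
  ∀ i j i' j' : V, G.Adj i j → G.Adj i i' → G.Adj j j' → i' ≠ j' ∧ G.Adj i' j'

/-- `G` satisfies MSC if the set of non-isolated vertices of `G` is nonempty and carries a
perfect matching `M` (a matching of `G` whose vertex set is exactly the set of non-isolated
vertices) such that for every edge `{i, j}` of `M`, every neighbour `i'` of `i` in `G` and
every neighbour `j'` of `j` in `G`, `{i', j'}` is an edge of `G`. -/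
def SatisfiesMSC (G : SimpleGraph V) : Prop :=
  ∃ M : G.Subgraph, M.verts = {v : V | ∃ w, G.Adj v w} ∧ M.verts.Nonempty ∧
    M.IsMatching ∧
    ∀ i j : V, M.Adj i j → ∀ i' j' : V, G.Adj i i' → G.Adj j j' → G.Adj i' j'

/-- The graph `G^{0-1}`: its edges are the edges `{i, j}` of `G` such that `a i + a j = 1`
for every basic `1`-cover `a` of `G`.  (Its vertex set is interpreted as the set of
non-isolated vertices of `G`; here it is defined on all of `V`, and the vertices of `G`
that are isolated stay isolated, so they can be excluded explicitly when needed.) -/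
def ZeroOne (G : SimpleGraph V) : SimpleGraph V where
  Adj i j := G.Adj i j ∧ ∀ a : V → ℕ, IsBasicCover G 1 a → a i + a j = 1
  symm := by
    constructor
    intro i j h
    exact ⟨h.1.symm, fun a ha => by rw [add_comm]; exact h.2 a ha⟩
  loopless := by
    constructor
    intro i h
    exact G.irrefl h.1

/-- `A ∪ B` is a vertex bipartition of the connected component `C` of `H`, and the edges of
`H` inside `C` are exactly the pairs `{x, y}` with `x ∈ A` and `y ∈ B` (so the component is
a complete bipartite graph on `A ∪ B`). -/
def IsCompBipartition (H : SimpleGraph V) (C : H.ConnectedComponent) (A B : Set V) : Prop :=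
  A ∪ B = C.supp ∧ Disjoint A B ∧
    ∀ x ∈ C.supp, ∀ y ∈ C.supp,
      (H.Adj x y ↔ (x ∈ A ∧ y ∈ B) ∨ (x ∈ B ∧ y ∈ A))

/-- The graph `G⁺` obtained from `G` by attaching a pendant vertex to each vertex of `G`:
`Sum.inl v` is the original vertex `v`, and `Sum.inr v` is the pendant attached to `v`. -/
def GPlus (G : SimpleGraph V) : SimpleGraph (V ⊕ V) where
  Adj x y :=
    match x, y with
    | Sum.inl u, Sum.inl v => G.Adj u v
    | Sum.inl u, Sum.inr v => u = v
    | Sum.inr u, Sum.inl v => u = v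
    | Sum.inr _, Sum.inr _ => False
  symm := by
    constructor
    rintro (u | u) (v | v) h
    · exact h.symm
    · exact h.symm
    · exact h.symm
    · exact h.elim
  loopless := by
    constructor
    rintro (u | u) h
    · exact G.irrefl h
    · exact h
/-- indicator function of a finset -/
def ind (S : Finset V) : V → ℕ := fun v => if v ∈ S then 1 else 0

/-- vertex cover -/
def IsVC (G : SimpleGraph V) (S : Finset V) : Prop := ∀ ⦃i j : V⦄, G.Adj i j → i ∈ S ∨ j ∈ S

/-- minimal vertex cover (local characterization) -/
def IsMinVC (G : SimpleGraph V) (S : Finset V) : Prop :=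
  IsVC G S ∧ ∀ v ∈ S, ∃ w, G.Adj v w ∧ w ∉ S

lemma sum_ind (S : Finset V) : ∑ v, ind S v = S.card := by
  unfold ind
  rw [Finset.sum_ite_mem, Finset.univ_inter, Finset.card_eq_sum_ones]

lemma basic_of_minVC {G : SimpleGraph V} {S : Finset V}
    (hedge : ∃ i j : V, G.Adj i j) (hS : IsMinVC G S) : IsBasicCover G 1 (ind S) := by
  obtain ⟨i0, j0, hij0⟩ := hedge
  have hSne : ∃ v, v ∈ S := by rcases hS.1 hij0 with h | h; exacts [⟨_, h⟩, ⟨_, h⟩]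
  constructor
  · constructor
    · obtain ⟨v, hv⟩ := hSne
      intro h
      have : ind S v = 0 := congrFun h v
      simp [ind, hv] at this
    · intro i j hij
      rcases hS.1 hij with h | h <;> simp [ind, h]
  · rintro ⟨b, c, hb, hc, habc⟩
    obtain ⟨v, hv⟩ := Function.ne_iff.1 hc.1
    have hcv : c v ≠ 0 := by simpa using hv
    have hsum : ind S v = b v + c v := congrFun habc v
    have hvS : v ∈ S := by
      by_contra hvS
      simp [ind, hvS] at hsum
      omega
    have hbv : b v = 0 := by simp [ind, hvS] at hsum; omega
    obtain ⟨w, hvw, hwS⟩ := hS.2 v hvS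
    have hsw : ind S w = b w + c w := congrFun habc w
    simp [ind, hwS] at hsw
    have := hb.2 v w hvw
    omega

lemma exists_minVC_of_basic {G : SimpleGraph V} {a : V → ℕ}
    (hiso : ∀ v : V, ∃ w, G.Adj v w) (ha : IsBasicCover G 1 a) :
    ∃ S : Finset V, IsMinVC G S ∧ a = ind S := by
  classical
  have hle : ∀ v, a v ≤ 1 := by
    intro v
    by_contra hv
    push_neg at hv
    apply ha.2
    refine ⟨a - ind {v}, ind {v}, ⟨?_, ?_⟩, ⟨?_, fun _ _ _ => Nat.zero_le _⟩, ?_⟩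
    · intro h
      have := congrFun h v
      simp [ind, Pi.sub_apply] at this
      omega
    · intro i j hij
      have := ha.1.2 i j hij
      by_cases hi : i = v <;> by_cases hj : j = v <;>
        simp_all [ind, Pi.sub_apply] <;> omega
    · intro h
      have := congrFun h v
      simp [ind] at this
    · funext u
      by_cases hu : u = v <;> simp [ind, hu, Pi.sub_apply, Pi.add_apply] <;> omega
  refine ⟨Finset.univ.filter (fun v => a v = 1), ⟨?_, ?_⟩, ?_⟩
  · intro i j hij
    have := ha.1.2 i j hij
    have := hle i; have := hle j
    simp only [Finset.mem_filter, Finset.mem_univ, true_and]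
    omega
  · intro v hv
    simp only [Finset.mem_filter, Finset.mem_univ, true_and] at hv
    by_contra hall
    push_neg at hall
    simp only [Finset.mem_filter, Finset.mem_univ, true_and] at hall
    apply ha.2
    obtain ⟨w0, hw0⟩ := hiso v
    have hw0v : a w0 = 1 := hall w0 hw0
    have hw0ne : w0 ≠ v := fun h => G.loopless.irrefl v (h ▸ hw0)
    refine ⟨a - ind {v}, ind {v}, ⟨?_, ?_⟩, ⟨?_, fun _ _ _ => Nat.zero_le _⟩, ?_⟩
    · intro h
      have := congrFun h w0
      simp [ind, Pi.sub_apply, hw0ne, hw0v] at this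
    · intro i j hij
      by_cases hi : i = v
      · subst hi
        have hj : a j = 1 := hall j hij
        have hjne : j ≠ i := G.ne_of_adj hij.symm
        simp [ind, Pi.sub_apply, hjne, hj]
      · by_cases hj : j = v
        · subst hj
          have hi' : a i = 1 := hall i hij.symm
          simp [ind, Pi.sub_apply, hi, hi']
        · have := ha.1.2 i j hij
          simp [ind, Pi.sub_apply, hi, hj]
          omega
    · intro h
      have := congrFun h v
      simp [ind] at this
    · funext u
      by_cases hu : u = v <;> simp [ind, hu, hv, Pi.sub_apply, Pi.add_apply] <;> omega
  · funext u
    have := hle u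
    simp only [ind, Finset.mem_filter, Finset.mem_univ, true_and]
    split <;> omega

lemma exists_minVC_subset {G : SimpleGraph V} :
    ∀ T : Finset V, IsVC G T → ∃ S, S ⊆ T ∧ IsMinVC G S := by
  intro T
  induction T using Finset.strongInduction with
  | _ T ih =>
    intro hT
    by_cases h : ∀ v ∈ T, ∃ w, G.Adj v w ∧ w ∉ T
    · exact ⟨T, subset_rfl, hT, h⟩
    · push_neg at h
      obtain ⟨v, hv, hall⟩ := h
      have hcov : IsVC G (T.erase v) := by
        intro i j hij
        by_cases hiv : i = v
        · subst hiv
          exact Or.inr (Finset.mem_erase.2 ⟨G.ne_of_adj hij.symm, hall j hij⟩)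
        · by_cases hjv : j = v
          · subst hjv
            exact Or.inl (Finset.mem_erase.2 ⟨hiv, hall i hij.symm⟩)
          · rcases hT hij with hi | hj
            · exact Or.inl (Finset.mem_erase.2 ⟨hiv, hi⟩)
            · exact Or.inr (Finset.mem_erase.2 ⟨hjv, hj⟩)
      obtain ⟨S, hsub, hmin⟩ := ih (T.erase v) (Finset.erase_ssubset hv) hcov
      exact ⟨S, hsub.trans (Finset.erase_subset _ _), hmin⟩

/-- MSC implies all minimal vertex covers have the same cardinality. -/
lemma minVC_card_of_msc {G : SimpleGraph V} (hiso : ∀ v : V, ∃ w, G.Adj v w)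
    (hmsc : SatisfiesMSC G)
    {S : Finset V} (hS : IsMinVC G S) : 2 * S.card = Fintype.card V := by
  classical
  obtain ⟨M, hverts, -, hmatch, hcond⟩ := hmsc
  have hvuniv : M.verts = Set.univ := by
    rw [hverts]; ext v; simpa using hiso v
  have hm : ∀ v : V, ∃! w, M.Adj v w := fun v =>
    hmatch (by rw [hvuniv]; trivial)
  choose m hm1 using fun v => (hm v).exists
  have hm2' : ∀ v w, M.Adj v w → w = m v := by
    intro v w hw
    exact ((hm v).unique hw (hm1 v))
  have hminv : ∀ v, m (m v) = v := fun v => (hm2' (m v) v (hm1 v).symm).symm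
  have hmne : ∀ v, m v ≠ v := fun v h => by
    have := M.adj_sub (hm1 v); rw [h] at this; exact G.loopless.irrefl v this
  -- exactly one of v, m v in S
  have hone : ∀ v, (v ∈ S ↔ m v ∉ S) := by
    intro v
    constructor
    · intro hv hmv
      obtain ⟨v', hv', hv'S⟩ := hS.2 v hv
      obtain ⟨w', hw', hw'S⟩ := hS.2 (m v) hmv
      have : G.Adj v' w' := hcond v (m v) (hm1 v) v' w' hv' hw'
      rcases hS.1 this with h | h
      exacts [hv'S h, hw'S h]
    · intro hmv
      rcases hS.1 (M.adj_sub (hm1 v)) with h | h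
      exacts [h, absurd h hmv]
  -- m maps S bijectively to Sᶜ
  have hminj : Function.Injective m := by
    intro a b h
    have := congrArg m h
    rwa [hminv, hminv] at this
  have himg : Finset.image m S = Sᶜ := by
    apply Finset.eq_of_subset_of_card_le
    · intro x hx
      obtain ⟨v, hv, rfl⟩ := Finset.mem_image.1 hx
      simpa using (hone v).1 hv
    · calc Sᶜ.card = (Finset.image m Sᶜ).card := (Finset.card_image_of_injective _ hminj).symm
        _ ≤ S.card := Finset.card_le_card (by
            intro x hx
            obtain ⟨v, hv, rfl⟩ := Finset.mem_image.1 hx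
            simp only [Finset.mem_compl] at hv
            by_contra h
            exact hv ((hone v).2 h))
        _ = (Finset.image m S).card := (Finset.card_image_of_injective _ hminj).symm
  have := Finset.card_compl S (α := V)
  rw [← himg, Finset.card_image_of_injective _ hminj] at this
  omega

section Hard
variable {G : SimpleGraph V}

lemma fin2 (x : Fin 2) : x = 0 ∨ x = 1 := by omega

/-- the colour-0 part of the bipartition -/
def part0 (col : V → Fin 2) : Finset V := Finset.univ.filter (fun v => col v = 0)

lemma part0_minVC (col : V → Fin 2) (hc : ∀ ⦃i j⦄, G.Adj i j → col i ≠ col j)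
    (hiso : ∀ v : V, ∃ w, G.Adj v w) : IsMinVC G (part0 col) := by
  constructor
  · intro i j hij
    rcases fin2 (col i) with h | h
    · exact Or.inl (by simp [part0, h])
    · rcases fin2 (col j) with h' | h'
      · exact Or.inr (by simp [part0, h'])
      · exact ((hc hij) (h.trans h'.symm)).elim
  · intro v hv
    obtain ⟨w, hw⟩ := hiso v
    refine ⟨w, hw, ?_⟩
    simp only [part0, Finset.mem_filter, Finset.mem_univ, true_and]
    intro h
    exact hc hw ((Finset.mem_filter.1 hv).2.trans h.symm)

lemma key_step (col : V → Fin 2)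
    (hc : ∀ ⦃i j⦄, G.Adj i j → col i ≠ col j)
    (hcard : ∀ S T : Finset V, IsMinVC G S → IsMinVC G T → S.card = T.card)
    (f : {x // x ∈ part0 col} → V)
    (hfinj : Function.Injective f)
    (hfadj : ∀ u : {x // x ∈ part0 col}, G.Adj ↑u (f u))
    (hiso : ∀ v : V, ∃ w, G.Adj v w)
    (u : {x // x ∈ part0 col})
    {x' y' : V} (hx' : G.Adj ↑u x') (hy' : G.Adj (f u) y') : G.Adj x' y' := by
  classical
  have hcol1 : ∀ w : {x // x ∈ part0 col}, col ↑w = 0 :=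
    fun w => (Finset.mem_filter.1 w.2).2
  have hcolf : ∀ w : {x // x ∈ part0 col}, col (f w) = 1 := by
    intro w
    rcases fin2 (col (f w)) with h | h
    · exact ((hc (hfadj w)) (by rw [hcol1 w, h])).elim
    · exact h
  by_contra hne
  have hne' : ¬ G.Adj y' x' := fun h => hne h.symm
  set P : Finset V → Prop := fun I => x' ∈ I ∧ y' ∈ I ∧ ∀ a ∈ I, ∀ b ∈ I, ¬ G.Adj a b
    with hP
  have hP0 : P {x', y'} := by
    refine ⟨by simp, by simp, ?_⟩
    intro a ha b hb
    simp only [Finset.mem_insert, Finset.mem_singleton] at ha hb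
    rcases ha with rfl | rfl <;> rcases hb with rfl | rfl <;>
      first | exact G.loopless.irrefl _ | exact hne | exact hne'
  obtain ⟨I, hIs, hImax⟩ := Finset.exists_max_image
    ((Finset.univ.powerset).filter P) Finset.card
    ⟨{x', y'}, Finset.mem_filter.2 ⟨Finset.mem_powerset.2 (Finset.subset_univ _), hP0⟩⟩
  have hIP : P I := (Finset.mem_filter.1 hIs).2
  have hSvc : IsVC G Iᶜ := by
    intro a b hab
    by_contra h
    push_neg at h
    simp only [Finset.mem_compl, not_not] at h
    exact hIP.2.2 a h.1 b h.2 hab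
  have hSmin : IsMinVC G Iᶜ := by
    refine ⟨hSvc, ?_⟩
    intro v hv
    by_contra hall
    push_neg at hall
    have hvI : v ∉ I := Finset.mem_compl.1 hv
    have hins : P (insert v I) := by
      refine ⟨Finset.mem_insert_of_mem hIP.1, Finset.mem_insert_of_mem hIP.2.1, ?_⟩
      intro a ha b hb hab
      rcases Finset.mem_insert.1 ha with rfl | ha' <;>
        rcases Finset.mem_insert.1 hb with rfl | hb'
      · exact G.loopless.irrefl _ hab
      · exact absurd hb' (Finset.mem_compl.1 (hall b hab))
      · exact absurd ha' (Finset.mem_compl.1 (hall a hab.symm))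
      · exact hIP.2.2 a ha' b hb' hab
    have := hImax (insert v I)
      (Finset.mem_filter.2 ⟨Finset.mem_powerset.2 (Finset.subset_univ _), hins⟩)
    rw [Finset.card_insert_of_notMem hvI] at this
    omega
  have hxS : (↑u : V) ∈ Iᶜ :=
    Finset.mem_compl.2 (fun h => hIP.2.2 _ h _ hIP.1 hx')
  have hyS : f u ∈ Iᶜ :=
    Finset.mem_compl.2 (fun h => hIP.2.2 _ h _ hIP.2.1 hy')
  set φ : {x // x ∈ part0 col} → V := fun w => if (↑w : V) ∈ Iᶜ then ↑w else f w with hφ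
  have hφS : ∀ w, φ w ∈ Iᶜ := by
    intro w
    simp only [hφ]
    split
    · assumption
    · next h => rcases hSvc (hfadj w) with h' | h'; exacts [absurd h' h, h']
  have hφinj : Function.Injective φ := by
    intro a b hab
    simp only [hφ] at hab
    split at hab <;> split at hab
    · exact Subtype.ext hab
    · have : col (f b) = 0 := by rw [← hab]; exact hcol1 a
      rw [hcolf b] at this; exact absurd this (by decide)
    · have : col (f a) = 0 := by rw [hab]; exact hcol1 b
      rw [hcolf a] at this; exact absurd this (by decide)
    · exact hfinj hab
  have hynotin : f u ∉ Finset.univ.image φ := by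
    intro h
    obtain ⟨w, -, hw⟩ := Finset.mem_image.1 h
    simp only [hφ] at hw
    split at hw
    · have : col (f u) = 0 := by rw [← hw]; exact hcol1 w
      rw [hcolf u] at this; exact absurd this (by decide)
    · next h' =>
        have : w = u := hfinj hw
        subst this
        exact h' hxS
  have hsub : insert (f u) (Finset.univ.image φ) ⊆ Iᶜ := by
    intro z hz
    rcases Finset.mem_insert.1 hz with rfl | hz'
    · exact hyS
    · obtain ⟨w, -, rfl⟩ := Finset.mem_image.1 hz'
      exact hφS w
  have hV1min : IsMinVC G (part0 col) := part0_minVC col hc hiso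
  have hScard := hcard Iᶜ (part0 col) hSmin hV1min
  have h1 := Finset.card_le_card hsub
  rw [Finset.card_insert_of_notMem hynotin,
    Finset.card_image_of_injective _ hφinj, Finset.card_univ, Fintype.card_coe] at h1
  omega

end Hard

/-- Villarreal: Let `G` be a bipartite graph with at least one vertex and
without isolated vertices.  Then `G` is unmixed if and only if `G` satisfies MSC. -/
theorem bipartite_unmixed_iff_msc [Nonempty V] (G : SimpleGraph V)
    (hbip : G.Colorable 2) (hiso : ∀ v : V, ∃ w, G.Adj v w) :
    IsUnmixed G ↔ SatisfiesMSC G := by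
  classical
  have hedge : ∃ i j : V, G.Adj i j := by
    obtain ⟨w, hw⟩ := hiso (Classical.arbitrary V)
    exact ⟨_, w, hw⟩
  constructor
  · -- unmixed → MSC
    intro hU
    obtain ⟨C⟩ := hbip
    set col : V → Fin 2 := ⇑C with hcoldef
    have hc : ∀ ⦃i j : V⦄, G.Adj i j → col i ≠ col j := fun i j h => C.valid h
    have hcard : ∀ S T : Finset V, IsMinVC G S → IsMinVC G T → S.card = T.card := by
      intro S T hS hT
      have := hU (ind S) (ind T) (basic_of_minVC hedge hS) (basic_of_minVC hedge hT)
      rwa [sum_ind, sum_ind] at this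
    have hV1min : IsMinVC G (part0 col) := part0_minVC col hc hiso
    have hlow : ∀ T : Finset V, IsVC G T → (part0 col).card ≤ T.card := by
      intro T hT
      obtain ⟨S, hsub, hmin⟩ := exists_minVC_subset T hT
      rw [hcard (part0 col) S hV1min hmin]
      exact Finset.card_le_card hsub
    -- Hall's condition
    set t : {x // x ∈ part0 col} → Finset V :=
      fun v => Finset.univ.filter (fun w => G.Adj ↑v w) with ht
    have hall : ∀ s : Finset {x // x ∈ part0 col}, s.card ≤ (s.biUnion t).card := by
      intro s
      set A : Finset V := s.image Subtype.val with hA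
      have hAcard : A.card = s.card := Finset.card_image_of_injective s Subtype.val_injective
      have hAsub : A ⊆ part0 col := by
        intro x hx
        obtain ⟨v, -, rfl⟩ := Finset.mem_image.1 hx
        exact v.2
      have hTvc : IsVC G ((part0 col \ A) ∪ s.biUnion t) := by
        intro i j hij
        have hkey : ∀ i j : V, G.Adj i j → i ∈ part0 col →
            i ∈ (part0 col \ A) ∪ s.biUnion t ∨ j ∈ (part0 col \ A) ∪ s.biUnion t := by
          intro i j hij hi
          by_cases hiA : i ∈ A
          · obtain ⟨v, hv, rfl⟩ := Finset.mem_image.1 hiA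
            refine Or.inr (Finset.mem_union_right _ ?_)
            exact Finset.mem_biUnion.2 ⟨v, hv, by simp [ht, hij]⟩
          · exact Or.inl (Finset.mem_union_left _ (Finset.mem_sdiff.2 ⟨hi, hiA⟩))
        rcases fin2 (col i) with h | h
        · exact hkey i j hij (by simp [part0, h])
        · rcases fin2 (col j) with h' | h'
          · exact (hkey j i hij.symm (by simp [part0, h'])).symm
          · exact ((hc hij) (h.trans h'.symm)).elim
      have h1 := hlow _ hTvc
      have h2 := Finset.card_union_le (part0 col \ A) (s.biUnion t)
      have h3 : (part0 col \ A).card = (part0 col).card - A.card :=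
        Finset.card_sdiff_of_subset hAsub
      have h4 : A.card ≤ (part0 col).card := Finset.card_le_card hAsub
      omega
    obtain ⟨f, hfinj, hft⟩ := (Finset.all_card_le_biUnion_card_iff_exists_injective t).1 hall
    have hfadj : ∀ u : {x // x ∈ part0 col}, G.Adj ↑u (f u) := by
      intro u
      have := hft u
      simp only [ht, Finset.mem_filter] at this
      exact this.2
    have hcolf : ∀ u : {x // x ∈ part0 col}, col (f u) = 1 := by
      intro u
      rcases fin2 (col (f u)) with h | h
      · exact ((hc (hfadj u)) (((Finset.mem_filter.1 u.2).2).trans h.symm)).elim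
      · exact h
    -- surjectivity onto the colour-1 part
    set col2 : V → Fin 2 := fun v => if col v = 0 then 1 else 0 with hcol2
    have hc2 : ∀ ⦃i j : V⦄, G.Adj i j → col2 i ≠ col2 j := by
      intro i j hij
      intro heq
      apply hc hij
      simp only [hcol2] at heq
      rcases fin2 (col i) with h1 | h1 <;> rcases fin2 (col j) with h2 | h2 <;>
        rw [h1, h2] <;> rw [h1, h2] at heq <;>
        first | rfl | (exfalso; revert heq; decide)
    have hV2min : IsMinVC G (part0 col2) := part0_minVC col2 hc2 hiso
    have himgsub : Finset.univ.image f ⊆ part0 col2 := by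
      intro x hx
      obtain ⟨u, -, rfl⟩ := Finset.mem_image.1 hx
      simp only [part0, hcol2, Finset.mem_filter, Finset.mem_univ, true_and]
      rw [hcolf u]
      simp
    have himg : Finset.univ.image f = part0 col2 := by
      apply Finset.eq_of_subset_of_card_le himgsub
      rw [Finset.card_image_of_injective _ hfinj, Finset.card_univ, Fintype.card_coe]
      exact (hcard _ _ hV2min hV1min).le
    have hsurj : ∀ v : V, col v = 1 → ∃ u, f u = v := by
      intro v hv
      have : v ∈ part0 col2 := by
        simp only [part0, hcol2, Finset.mem_filter, Finset.mem_univ, true_and]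
        rw [hv]; simp
      rw [← himg] at this
      obtain ⟨u, -, hu⟩ := Finset.mem_image.1 this
      exact ⟨u, hu⟩
    -- the matching subgraph
    refine ⟨{
      verts := {v : V | ∃ w, G.Adj v w},
      Adj := fun a b => (∃ h : a ∈ part0 col, b = f ⟨a, h⟩) ∨
        (∃ h : b ∈ part0 col, a = f ⟨b, h⟩),
      adj_sub := by
        rintro a b (⟨h, rfl⟩ | ⟨h, rfl⟩)
        exacts [hfadj ⟨a, h⟩, (hfadj ⟨b, h⟩).symm],
      edge_vert := by
        rintro a b (⟨h, rfl⟩ | ⟨h, rfl⟩)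
        exacts [⟨_, hfadj ⟨a, h⟩⟩, ⟨_, (hfadj ⟨b, h⟩).symm⟩],
      symm := by
        constructor
        rintro a b (h | h)
        exacts [Or.inr h, Or.inl h] }, rfl, ⟨Classical.arbitrary V, hiso _⟩, ?_, ?_⟩
    · -- IsMatching
      intro v hv
      rcases fin2 (col v) with h | h
      · have hvV1 : v ∈ part0 col := by simp [part0, h]
        refine ⟨f ⟨v, hvV1⟩, Or.inl ⟨hvV1, rfl⟩, ?_⟩
        rintro w (⟨h', rfl⟩ | ⟨h', rfl⟩)
        · rfl
        · exfalso
          have := hcolf ⟨w, h'⟩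
          rw [h] at this
          exact absurd this (by decide)
      · obtain ⟨u, rfl⟩ := hsurj v h
        refine ⟨↑u, Or.inr ⟨u.2, by rw [Subtype.coe_eta]⟩, ?_⟩
        rintro w (⟨h', rfl⟩ | ⟨h', heq⟩)
        · exfalso
          have h0 : col (f u) = 0 := (Finset.mem_filter.1 h').2
          rw [hcolf u] at h0
          exact absurd h0 (by decide)
        · have : (⟨w, h'⟩ : {x // x ∈ part0 col}) = u := hfinj heq.symm
          exact congrArg Subtype.val this
    · -- MSC condition
      rintro i j (⟨h, rfl⟩ | ⟨h, rfl⟩) i' j' hi' hj'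
      · exact key_step col hc hcard f hfinj hfadj hiso ⟨i, h⟩ hi' hj'
      · exact (key_step col hc hcard f hfinj hfadj hiso ⟨j, h⟩ hj' hi').symm
  · -- MSC → unmixed
    intro hmsc a b ha hb
    obtain ⟨S, hS, rfl⟩ := exists_minVC_of_basic hiso ha
    obtain ⟨T, hT, rfl⟩ := exists_minVC_of_basic hiso hb
    rw [sum_ind, sum_ind]
    have h1 := minVC_card_of_msc hiso hmsc hS
    have h2 := minVC_card_of_msc hiso hmsc hT
    omega
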